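/- arXiv:1207.5366 — 4 statements merged into one kernel-verified Lean document; each statement's English description precedes it below -/
import Mathlib

section
/- The generating function identity 1 + Σ_{n≥1} ζ(2̄,…,2̄ with n copies) x^{2n} = (sinh(πx/2)/(πx/2)) · cos(πx/2) holds as an identity of entire functions of x (equivalently, of formal power series with the stated coefficients). -/
open scoped Real

/-- The depth-`n` alternating Euler sum `ζ(2̄,…,2̄)`:
the sum over strictly decreasing tuples `k₁ > ⋯ > kₙ ≥ 1` of `∏ (-1)^{kᵢ}/kᵢ²`. -/
noncomputable def zetaBar2 (n : ℕ) : ℝ :=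
  ∑' f : {f : Fin n → ℕ // StrictAnti f ∧ ∀ i, 1 ≤ f i},
    ∏ i, (-1 : ℝ) ^ (f.1 i) / ((f.1 i : ℝ)) ^ 2

open Filter Finset Topology

namespace ZB2

noncomputable def a (x : ℝ) (j : ℕ) : ℝ := (-1) ^ (j + 1) * x ^ 2 / ((j : ℝ) + 1) ^ 2

lemma abs_a (x : ℝ) (j : ℕ) : |a x j| = x ^ 2 / ((j : ℝ) + 1) ^ 2 := by
  have h1 : ((j : ℝ) + 1) ^ 2 ≠ 0 := by positivity
  rw [a, abs_div, abs_mul, abs_pow, abs_neg, abs_one, one_pow, one_mul, abs_pow,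
    abs_pow, abs_of_nonneg (by positivity : (0:ℝ) ≤ (j:ℝ) + 1), sq_abs]

lemma summable_abs_a (x : ℝ) : Summable fun j => |a x j| := by
  have h : Summable (fun j : ℕ => x ^ 2 * (1 / ((j : ℝ) + 1) ^ 2)) := by
    apply Summable.mul_left
    have := Real.summable_one_div_nat_pow (p := 2) |>.2 one_lt_two
    exact (summable_nat_add_iff 1).2 this |>.congr (by intro n; push_cast; ring_nf)
  refine h.congr fun j => ?_
  rw [abs_a]; ring

lemma summable_prod_finset (x : ℝ) :
    Summable fun s : Finset ℕ => ∏ j ∈ s, a x j := by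
  have habs := summable_abs_a x
  refine Summable.of_abs ?_
  set c : ℝ := Real.exp (∑' j, |a x j|) with hc
  refine summable_of_sum_le (c := c) (fun s => by positivity) fun u => ?_
  obtain ⟨N, hN⟩ := (u.sup id).exists_nat_subset_range
  have hsub : u ⊆ (Finset.range N).powerset := by
    intro s hs
    exact Finset.mem_powerset.2 ((Finset.le_sup (f := id) hs).trans hN)
  calc ∑ s ∈ u, |∏ j ∈ s, a x j| ≤ ∑ s ∈ (Finset.range N).powerset, |∏ j ∈ s, a x j| :=
        Finset.sum_le_sum_of_subset_of_nonneg hsub (fun s _ _ => by positivity)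
    _ = ∑ s ∈ (Finset.range N).powerset, (∏ j ∈ s, |a x j|) * ∏ j ∈ Finset.range N \ s, 1 := by
        simp [Finset.abs_prod]
    _ = ∏ j ∈ Finset.range N, (|a x j| + 1) := (Finset.prod_add _ _ _).symm
    _ ≤ ∏ j ∈ Finset.range N, Real.exp (|a x j|) := by
        refine Finset.prod_le_prod (fun j _ => by positivity) fun j _ => ?_
        have := Real.add_one_le_exp (|a x j|)
        linarith
    _ = Real.exp (∑ j ∈ Finset.range N, |a x j|) := by rw [Real.exp_sum]
    _ ≤ c := by
        rw [hc, Real.exp_le_exp]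
        exact Summable.sum_le_tsum _ (fun j _ => abs_nonneg _) habs

lemma tendsto_partial_prod (x : ℝ) :
    Tendsto (fun N => ∏ j ∈ Finset.range N, (1 + a x j)) atTop
      (𝓝 (∑' s : Finset ℕ, ∏ j ∈ s, a x j)) := by
  have hs : Tendsto (fun t : Finset (Finset ℕ) => ∑ s ∈ t, ∏ j ∈ s, a x j) atTop
      (𝓝 (∑' s : Finset ℕ, ∏ j ∈ s, a x j)) := (summable_prod_finset x).hasSum
  have h2 : Tendsto (fun N : ℕ => (Finset.range N).powerset) atTop atTop := by
    refine tendsto_atTop_finset_of_monotone (fun m n h => Finset.powerset_mono.2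
      (Finset.range_subset_range.2 h)) fun s => ?_
    obtain ⟨N, hN⟩ := s.exists_nat_subset_range
    exact ⟨N, Finset.mem_powerset.2 hN⟩
  refine (hs.comp h2).congr fun N => ?_
  calc ∑ s ∈ (Finset.range N).powerset, ∏ j ∈ s, a x j
      = ∑ s ∈ (Finset.range N).powerset, (∏ j ∈ s, a x j) * ∏ j ∈ Finset.range N \ s, 1 := by
        simp
    _ = ∏ j ∈ Finset.range N, (a x j + 1) := (Finset.prod_add _ _ _).symm
    _ = ∏ j ∈ Finset.range N, (1 + a x j) := by simp [add_comm]

/-- strictly decreasing `n`-tuples of positive naturals correspond to `n`-element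
subsets of `ℕ` (shifted down by one). -/
def eqv (n : ℕ) : {f : Fin n → ℕ // StrictAnti f ∧ ∀ i, 1 ≤ f i} ≃
    {s : Finset ℕ // s.card = n} where
  toFun f := ⟨Finset.image (fun i => f.1 i - 1) Finset.univ, by
    rw [Finset.card_image_of_injective _ ?_, Finset.card_univ, Fintype.card_fin]
    intro i j h
    have h' : f.1 i - 1 = f.1 j - 1 := h
    have h1 := f.2.2 i; have h2 := f.2.2 j
    exact f.2.1.injective (by omega)⟩
  invFun s := ⟨fun i => s.1.orderEmbOfFin s.2 i.rev + 1, by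
      intro i j hij
      have : j.rev < i.rev := by simpa [Fin.rev_lt_rev] using hij
      simpa using (s.1.orderEmbOfFin s.2).strictMono this, fun i => le_add_self⟩
  left_inv f := by
    rcases f with ⟨f, hanti, hpos⟩
    ext i
    simp only
    set s : Finset ℕ := Finset.image (fun i => f i - 1) Finset.univ with hs
    have hcard : s.card = n := by
      rw [hs, Finset.card_image_of_injective _ ?_, Finset.card_univ, Fintype.card_fin]
      intro i j h
      have h' : f i - 1 = f j - 1 := h
      have h1 := hpos i; have h2 := hpos j
      exact hanti.injective (by omega)
    have hmono : StrictMono (fun i : Fin n => f i.rev - 1) := by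
      intro i j hij
      have hr : j.rev < i.rev := by simpa [Fin.rev_lt_rev] using hij
      have h2 := hanti hr
      have h1 := hpos i.rev
      show f i.rev - 1 < f j.rev - 1
      omega
    have hmem : ∀ i : Fin n, f i.rev - 1 ∈ s := fun i => Finset.mem_image_of_mem _ (Finset.mem_univ _)
    have huniq := Finset.orderEmbOfFin_unique hcard hmem hmono
    have h3 : f i - 1 = s.orderEmbOfFin hcard i.rev := by
      simpa [Fin.rev_rev] using congrFun huniq i.rev
    have h1 := hpos i
    show s.orderEmbOfFin hcard i.rev + 1 = f i
    omega
  right_inv s := by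
    rcases s with ⟨s, hcard⟩
    ext j
    simp only [Finset.mem_image, Finset.mem_univ, true_and]
    constructor
    · rintro ⟨i, rfl⟩
      simpa using s.orderEmbOfFin_mem hcard i.rev
    · intro hj
      have : j ∈ Set.range (s.orderEmbOfFin hcard) := by
        rw [Finset.range_orderEmbOfFin]; exact hj
      obtain ⟨i, hi⟩ := this
      exact ⟨i.rev, by simp [Fin.rev_rev, hi]⟩

lemma tsum_card_eq (x : ℝ) (n : ℕ) :
    (∑' s : {s : Finset ℕ // Finset.card s = n}, ∏ j ∈ s.1, a x j)
      = zetaBar2 n * x ^ (2 * n) := by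
  rw [← (eqv n).tsum_eq]
  have key : ∀ f : {f : Fin n → ℕ // StrictAnti f ∧ ∀ i, 1 ≤ f i},
      (∏ j ∈ ((eqv n) f).1, a x j)
        = (∏ i, (-1 : ℝ) ^ (f.1 i) / ((f.1 i : ℝ)) ^ 2) * x ^ (2 * n) := by
    rintro ⟨f, hanti, hpos⟩
    have hinj : ∀ i ∈ Finset.univ, ∀ j ∈ Finset.univ,
        f i - 1 = f j - 1 → i = j := by
      intro i _ j _ h
      have h1 := hpos i; have h2 := hpos j
      exact hanti.injective (by omega)
    show (∏ j ∈ Finset.image (fun i => f i - 1) Finset.univ, a x j) = _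
    rw [Finset.prod_image hinj]
    have hterm : ∀ i : Fin n, a x (f i - 1)
        = ((-1 : ℝ) ^ (f i) / ((f i : ℝ)) ^ 2) * x ^ 2 := by
      intro i
      have h1 := hpos i
      have hc : ((f i - 1 : ℕ) : ℝ) + 1 = (f i : ℝ) := by
        have : (f i - 1) + 1 = f i := by omega
        exact_mod_cast congrArg (Nat.cast (R := ℝ)) this
      rw [a, hc, show f i - 1 + 1 = f i by omega]
      ring
    rw [Finset.prod_congr rfl fun i _ => hterm i, Finset.prod_mul_distrib,
      Finset.prod_const, Finset.card_univ, Fintype.card_fin, ← pow_mul]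
  rw [tsum_congr key, tsum_mul_right, zetaBar2]

lemma zetaBar2_zero : zetaBar2 0 = 1 := by
  rw [zetaBar2]
  have : ∀ f : {f : Fin 0 → ℕ // StrictAnti f ∧ ∀ i, 1 ≤ f i},
      (∏ i, (-1 : ℝ) ^ (f.1 i) / ((f.1 i : ℝ)) ^ 2) = 1 := fun f => by simp
  rw [tsum_congr this]
  haveI : Unique {f : Fin 0 → ℕ // StrictAnti f ∧ ∀ i, 1 ≤ f i} :=
    ⟨⟨⟨fun i => i.elim0, fun i => i.elim0, fun i => i.elim0⟩⟩,
      fun f => Subtype.ext (funext fun i => i.elim0)⟩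
  rw [show (∑' _ : {f : Fin 0 → ℕ // StrictAnti f ∧ ∀ i, 1 ≤ f i}, (1:ℝ))
      = (1:ℝ) from tsum_eq_single default fun b hb => absurd (Unique.eq_default b) hb]

lemma tendsto_main (x : ℝ) :
    Tendsto (fun N => ∏ j ∈ Finset.range N, (1 + a x j)) atTop
      (𝓝 (1 + ∑' n : ℕ, zetaBar2 (n + 1) * x ^ (2 * (n + 1)))) := by
  have h := tendsto_partial_prod x
  have hsig : Summable fun p : Σ n : ℕ, {s : Finset ℕ // Finset.card s = n} =>
      ∏ j ∈ p.2.1, a x j := by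
    exact ((Equiv.summable_iff (Equiv.sigmaFiberEquiv (Finset.card : Finset ℕ → ℕ))).2 (summable_prod_finset x)).congr fun p => rfl
  have h1 : (∑' s : Finset ℕ, ∏ j ∈ s, a x j)
      = ∑' n : ℕ, ∑' s : {s : Finset ℕ // Finset.card s = n}, ∏ j ∈ s.1, a x j := by
    rw [← (Equiv.sigmaFiberEquiv (Finset.card : Finset ℕ → ℕ)).tsum_eq]
    exact Summable.tsum_sigma hsig
  have h2 : Summable fun n : ℕ =>
      ∑' s : {s : Finset ℕ // Finset.card s = n}, ∏ j ∈ s.1, a x j := hsig.sigma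
  rw [h1, Summable.tsum_eq_zero_add h2] at h
  simp only [tsum_card_eq, zetaBar2_zero] at h
  simpa using h

lemma tendsto_B (x : ℝ) :
    Tendsto (fun N => (π * x / 2) * ∏ m ∈ Finset.range N, (1 + x ^ 2 / (2 * (m : ℝ) + 2) ^ 2))
      atTop (𝓝 (Real.sinh (π * x / 2))) := by
  have h := Complex.tendsto_euler_sin_prod ((x : ℂ) / 2 * Complex.I)
  have hz2 : ((x : ℂ) / 2 * Complex.I) ^ 2 = -((x : ℂ) ^ 2 / 4) := by
    rw [mul_pow, Complex.I_sq]; ring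
  have hlim : Complex.sin (π * ((x : ℂ) / 2 * Complex.I))
      = (Real.sinh (π * x / 2) : ℂ) * Complex.I := by
    rw [show (π : ℂ) * ((x : ℂ) / 2 * Complex.I) = ((π * x / 2 : ℝ) : ℂ) * Complex.I by
      push_cast; ring, Complex.sin_mul_I, Complex.ofReal_sinh]
  rw [hlim] at h
  have hseq : ∀ N : ℕ, (π : ℂ) * ((x : ℂ) / 2 * Complex.I) *
      ∏ j ∈ Finset.range N, (1 - ((x : ℂ) / 2 * Complex.I) ^ 2 / ((j : ℂ) + 1) ^ 2)
      = (((π * x / 2) * ∏ m ∈ Finset.range N, (1 + x ^ 2 / (2 * (m : ℝ) + 2) ^ 2) : ℝ) : ℂ)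
        * Complex.I := by
    intro N
    have hprod : ∀ j ∈ Finset.range N, (1 : ℂ) - ((x : ℂ) / 2 * Complex.I) ^ 2 / ((j : ℂ) + 1) ^ 2
        = (((1 + x ^ 2 / (2 * (j : ℝ) + 2) ^ 2 : ℝ)) : ℂ) := by
      intro j _
      rw [hz2]
      have hj : ((j : ℂ)) + 1 ≠ 0 := Nat.cast_add_one_ne_zero (R := ℂ) j
      have hj2 : (2 : ℂ) * (j : ℂ) + 2 ≠ 0 := by
        intro hcon
        apply hj
        have : (2 : ℂ) * ((j : ℂ) + 1) = 0 := by rw [← hcon]; ring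
        simpa using this
      push_cast
      field_simp
      ring
    rw [Finset.prod_congr rfl hprod, ← Complex.ofReal_prod]
    push_cast
    ring
  rw [funext hseq] at h
  have h2 := h.mul_const (-Complex.I)
  have hsimp : ∀ z : ℂ, z * Complex.I * -Complex.I = z := by
    intro z
    rw [mul_assoc, mul_neg, Complex.I_mul_I]; ring
  simp only [hsimp] at h2
  have h3 := (Complex.continuous_re.tendsto _).comp h2
  simp only [Function.comp_def, Complex.ofReal_re] at h3
  exact h3

lemma key_identity (x : ℝ) (N : ℕ) :
    (1 - x) * (2 * (N : ℝ) + 1) *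
        (∏ j ∈ Finset.range N, (1 - ((1 - x) / 2) ^ 2 / ((j : ℝ) + 1) ^ 2)) *
        (∏ i ∈ Finset.range N, ((2 * (i : ℝ) + 2) / (2 * (i : ℝ) + 1)) *
          ((2 * (i : ℝ) + 2) / (2 * (i : ℝ) + 3)))
      = (2 * (N : ℝ) + 1 - x) * ∏ j ∈ Finset.range N, (1 - x ^ 2 / (2 * (j : ℝ) + 1) ^ 2) := by
  induction N with
  | zero => simp
  | succ N ih =>
    have h1 : (2 * (N : ℝ) + 1) ≠ 0 := by positivity
    have h2 : (2 * (N : ℝ) + 2) ≠ 0 := by positivity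
    have h3 : (2 * (N : ℝ) + 3) ≠ 0 := by positivity
    have h4 : ((N : ℝ) + 1) ≠ 0 := by positivity
    rw [Finset.prod_range_succ, Finset.prod_range_succ, Finset.prod_range_succ]
    push_cast
    set D := ∏ j ∈ Finset.range N, (1 - ((1 - x) / 2) ^ 2 / ((j : ℝ) + 1) ^ 2) with hD
    set W := ∏ i ∈ Finset.range N, ((2 * (i : ℝ) + 2) / (2 * (i : ℝ) + 1)) *
          ((2 * (i : ℝ) + 2) / (2 * (i : ℝ) + 3)) with hW
    set A := ∏ j ∈ Finset.range N, (1 - x ^ 2 / (2 * (j : ℝ) + 1) ^ 2) with hA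
    have hdA : (1 - x ^ 2 / (2 * (N : ℝ) + 1) ^ 2)
        = (2 * (N : ℝ) + 1 - x) * (2 * (N : ℝ) + 1 + x) / (2 * (N : ℝ) + 1) ^ 2 := by
      field_simp; ring
    rw [hdA]
    have hrhs : (2 * ((N : ℝ) + 1) + 1 - x) *
        (A * ((2 * (N : ℝ) + 1 - x) * (2 * (N : ℝ) + 1 + x) / (2 * (N : ℝ) + 1) ^ 2))
        = ((2 * ((N : ℝ) + 1) + 1 - x) * (2 * (N : ℝ) + 1 + x) / (2 * (N : ℝ) + 1) ^ 2) *
          ((2 * (N : ℝ) + 1 - x) * A) := by ring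
    rw [hrhs, ← ih]
    field_simp
    ring

lemma tendsto_A (x : ℝ) :
    Tendsto (fun N => ∏ m ∈ Finset.range N, (1 - x ^ 2 / (2 * (m : ℝ) + 1) ^ 2)) atTop
      (𝓝 (Real.cos (π * x / 2))) := by
  have hD := Real.tendsto_euler_sin_prod ((1 - x) / 2)
  have hsin : Real.sin (π * ((1 - x) / 2)) = Real.cos (π * x / 2) := by
    rw [show π * ((1 - x) / 2) = π / 2 - π * x / 2 by ring, Real.sin_pi_div_two_sub]
  rw [hsin] at hD
  have hW := Real.tendsto_prod_pi_div_two
  have hπ : (π : ℝ) ≠ 0 := Real.pi_ne_zero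
  have h1 : Tendsto (fun N => (∏ m ∈ Finset.range N, (1 - x ^ 2 / (2 * (m : ℝ) + 1) ^ 2)) *
      ((2 * (N : ℝ) + 1 - x) / (2 * (N : ℝ) + 1))) atTop (𝓝 (Real.cos (π * x / 2))) := by
    have base := (hD.mul hW).mul_const (2 / π)
    have hval : Real.cos (π * x / 2) * (π / 2) * (2 / π) = Real.cos (π * x / 2) := by
      field_simp
    rw [hval] at base
    refine base.congr fun N => ?_
    have hk := key_identity x N
    have hNe : (2 * (N : ℝ) + 1) ≠ 0 := by positivity
    generalize hDv : (∏ j ∈ Finset.range N, (1 - ((1 - x) / 2) ^ 2 / ((j : ℝ) + 1) ^ 2)) = Dv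
      at hk ⊢
    generalize hWv : (∏ i ∈ Finset.range N, ((2 * (i : ℝ) + 2) / (2 * (i : ℝ) + 1)) *
      ((2 * (i : ℝ) + 2) / (2 * (i : ℝ) + 3))) = Wv at hk ⊢
    generalize hAv : (∏ j ∈ Finset.range N, (1 - x ^ 2 / (2 * (j : ℝ) + 1) ^ 2)) = Av at hk ⊢
    calc π * ((1 - x) / 2) * Dv * Wv * (2 / π)
        = (1 - x) * (2 * (N : ℝ) + 1) * Dv * Wv / (2 * (N : ℝ) + 1) := by
          field_simp
      _ = (2 * (N : ℝ) + 1 - x) * Av / (2 * (N : ℝ) + 1) := by rw [hk]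
      _ = Av * ((2 * (N : ℝ) + 1 - x) / (2 * (N : ℝ) + 1)) := by ring
  have h2 : Tendsto (fun N : ℕ => (2 * (N : ℝ) + 1 - x) / (2 * (N : ℝ) + 1)) atTop (𝓝 1) := by
    have hat : Tendsto (fun N : ℕ => 2 * (N : ℝ) + 1) atTop atTop := by
      apply tendsto_atTop_add_const_right
      exact (tendsto_natCast_atTop_atTop (R := ℝ)).const_mul_atTop two_pos
    have hinv : Tendsto (fun N : ℕ => x * (2 * (N : ℝ) + 1)⁻¹) atTop (𝓝 0) := by
      simpa using hat.inv_tendsto_atTop.const_mul x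
    have hfin : Tendsto (fun N : ℕ => 1 - x * (2 * (N : ℝ) + 1)⁻¹) atTop (𝓝 (1 - 0)) :=
      tendsto_const_nhds.sub hinv
    rw [sub_zero] at hfin
    refine hfin.congr fun N => ?_
    have hNe : (2 * (N : ℝ) + 1) ≠ 0 := by positivity
    field_simp
  have h3 := h1.div h2 one_ne_zero
  rw [div_one] at h3
  have hne : ∀ᶠ N : ℕ in atTop, (2 * (N : ℝ) + 1 - x) / (2 * (N : ℝ) + 1) ≠ 0 :=
    h2.eventually_ne one_ne_zero
  refine h3.congr' ?_
  filter_upwards [hne] with N hN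
  simp only [Pi.div_apply]
  rw [mul_div_assoc, div_self hN, mul_one]

lemma prod_split (x : ℝ) (N : ℕ) :
    ∏ j ∈ Finset.range (2 * N), (1 + a x j)
      = (∏ m ∈ Finset.range N, (1 - x ^ 2 / (2 * (m : ℝ) + 1) ^ 2)) *
        ∏ m ∈ Finset.range N, (1 + x ^ 2 / (2 * (m : ℝ) + 2) ^ 2) := by
  induction N with
  | zero => simp
  | succ N ih =>
    have ha1 : a x (2 * N) = -(x ^ 2 / (2 * (N : ℝ) + 1) ^ 2) := by
      rw [a]
      have h : (-1 : ℝ) ^ (2 * N + 1) = -1 := Odd.neg_one_pow ⟨N, by ring⟩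
      rw [h]; push_cast; ring
    have ha2 : a x (2 * N + 1) = x ^ 2 / (2 * (N : ℝ) + 2) ^ 2 := by
      rw [a]
      have h : (-1 : ℝ) ^ (2 * N + 1 + 1) = 1 := Even.neg_one_pow ⟨N + 1, by ring⟩
      rw [h]; push_cast; ring
    have l1 : ∏ j ∈ Finset.range (2 * (N + 1)), (1 + a x j)
        = ((∏ j ∈ Finset.range (2 * N), (1 + a x j)) * (1 + a x (2 * N)))
          * (1 + a x (2 * N + 1)) := by
      rw [show 2 * (N + 1) = 2 * N + 1 + 1 by ring, Finset.prod_range_succ,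
        Finset.prod_range_succ]
    rw [l1, ih, Finset.prod_range_succ, Finset.prod_range_succ, ha1, ha2]
    push_cast; ring

end ZB2

open Filter Topology in
/-- Generating function identity
`1 + Σ_{n≥1} ζ(2̄,…,2̄) x^{2n} = (sinh(πx/2)/(πx/2))·cos(πx/2)`,
stated with both sides multiplied by `πx/2` so that it is an identity of
entire functions of the real variable `x`. -/
theorem zetaBar2_genFun (x : ℝ) :
    (π * x / 2) * (1 + ∑' n : ℕ, zetaBar2 (n + 1) * x ^ (2 * (n + 1))) =
      Real.sinh (π * x / 2) * Real.cos (π * x / 2) := by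
  have hmain := (ZB2.tendsto_main x).const_mul (π * x / 2)
  have h2N : Tendsto (fun N : ℕ => 2 * N) atTop atTop :=
    tendsto_atTop_mono (fun n => by simpa using (by omega : n ≤ 2 * n)) tendsto_id
  have hsub := hmain.comp h2N
  have hAB := (ZB2.tendsto_A x).mul (ZB2.tendsto_B x)
  have hsub' : Tendsto (fun N : ℕ =>
      (∏ m ∈ Finset.range N, (1 - x ^ 2 / (2 * (m : ℝ) + 1) ^ 2)) *
        ((π * x / 2) * ∏ m ∈ Finset.range N, (1 + x ^ 2 / (2 * (m : ℝ) + 2) ^ 2))) atTop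
      (𝓝 ((π * x / 2) * (1 + ∑' n : ℕ, zetaBar2 (n + 1) * x ^ (2 * (n + 1))))) := by
    refine hsub.congr fun N => ?_
    show (π * x / 2) * ∏ j ∈ Finset.range (2 * N), (1 + ZB2.a x j) = _
    rw [ZB2.prod_split]; ring
  have := tendsto_nhds_unique hsub' hAB
  rw [this]; ring
end

section
/- For every positive integer n ≥ 2, Σ_{j=1}^{n-1} ζ(2j)ζ(2̄(n-j)) = (1/2)ζ(2n) + n·ζ(2̄n). -/
open Filter Finset

noncomputable def Z : ℝ := ∑' i : ℕ, 1 / ((i:ℝ)+1)^2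

lemma summ_pow (m : ℕ) (hm : 2 ≤ m) : Summable (fun i : ℕ => 1 / ((i:ℝ)+1)^m) := by
  have := (Real.summable_one_div_nat_pow (p := m)).mpr (by omega)
  have h2 := (summable_nat_add_iff (f := fun n : ℕ => 1/(n:ℝ)^m) 1).mpr this
  refine h2.congr fun i => by push_cast; ring_nf

lemma summ_shift_sq (c : ℕ) : Summable (fun k : ℕ => 1 / ((k:ℝ) - c)^2) := by
  have h := summ_pow 2 le_rfl
  have : Summable (fun k : ℕ => 1 / (((k + (c+1) : ℕ):ℝ) - c)^2) := by
    refine h.congr fun i => by push_cast; ring_nf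
  exact (summable_nat_add_iff (c+1)).mp this

lemma tsum_shift_sq_le (c : ℕ) : ∑' k : ℕ, 1 / ((k:ℝ) - c)^2 ≤ 2 * Z := by
  have hsum := summ_shift_sq c
  rw [← Summable.sum_add_tsum_nat_add (c+1) hsum]
  have htail : ∑' k : ℕ, 1 / (((k + (c+1):ℕ):ℝ) - c)^2 = Z := by
    refine tsum_congr fun i => by push_cast; ring_nf
  have hhead : ∑ k ∈ range (c+1), 1 / ((k:ℝ) - c)^2 ≤ Z := by
    rw [← Finset.sum_range_reflect]
    have heq : ∀ i ∈ range (c+1), 1 / (((c + 1 - 1 - i : ℕ):ℝ) - c)^2 = 1 / ((i:ℝ))^2 := by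
      intro i hi
      simp only [mem_range] at hi
      have : ((c + 1 - 1 - i : ℕ):ℝ) = (c:ℝ) - i := by
        have : c + 1 - 1 - i = c - i := by omega
        rw [this]; push_cast [Nat.cast_sub (by omega : i ≤ c)]; ring
      rw [this]; ring_nf
    rw [Finset.sum_congr rfl heq, Finset.sum_range_succ']
    simp only [Nat.cast_zero]
    rw [zero_pow (by norm_num), div_zero, add_zero]
    have : ∀ i ∈ range c, 1 / (((i+1:ℕ)):ℝ)^2 = 1 / ((i:ℝ)+1)^2 := fun i _ => by push_cast; ring_nf
    rw [Finset.sum_congr rfl this]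
    exact Summable.sum_le_tsum (range c) (fun i _ => by positivity) (summ_pow 2 le_rfl)
  have : (0:ℝ) ≤ Z := tsum_nonneg fun i => by positivity
  rw [htail]; linarith

lemma summ_alt (m : ℕ) (hm : 2 ≤ m) : Summable (fun i : ℕ => (-1:ℝ)^(i+1) / ((i:ℝ)+1)^m) := by
  refine Summable.of_abs ((summ_pow m hm).congr fun i => ?_)
  rw [abs_div, abs_pow, abs_neg, abs_one, one_pow]
  congr 1
  rw [abs_of_pos]; positivity

lemma tsum_telescope (b : ℕ → ℝ) (c : ℕ) (f : ℕ → ℝ)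
    (hf : ∀ k, f k = b k - b (k + c)) (hs : Summable f)
    (hb : Tendsto b atTop (nhds 0)) : ∑' k, f k = ∑ i ∈ range c, b i := by
  have key : ∀ N, ∑ k ∈ range N, f k = ∑ i ∈ range c, b i - ∑ i ∈ range c, b (N + i) := by
    intro N
    have h1 : ∑ k ∈ range N, f k = ∑ k ∈ range N, b k - ∑ k ∈ range N, b (k + c) := by
      simp only [hf]; rw [Finset.sum_sub_distrib]
    have h2 : ∑ k ∈ range (N + c), b k = ∑ k ∈ range N, b k + ∑ i ∈ range c, b (N + i) :=
      Finset.sum_range_add b N c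
    have h3 : ∑ k ∈ range (c + N), b k = ∑ i ∈ range c, b i + ∑ i ∈ range N, b (c + i) :=
      Finset.sum_range_add b c N
    have h4 : ∑ k ∈ range N, b (k + c) = ∑ i ∈ range N, b (c + i) := by
      refine Finset.sum_congr rfl fun i _ => by rw [Nat.add_comm]
    rw [h1, h4]
    have : ∑ k ∈ range (N + c), b k = ∑ k ∈ range (c + N), b k := by rw [Nat.add_comm]
    rw [h2, h3] at this
    linarith
  have t1 : Tendsto (fun N => ∑ k ∈ range N, f k) atTop (nhds (∑' k, f k)) :=
    hs.hasSum.tendsto_sum_nat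
  have t2 : Tendsto (fun N => ∑ i ∈ range c, b i - ∑ i ∈ range c, b (N + i)) atTop
      (nhds (∑ i ∈ range c, b i - 0)) := by
    refine Tendsto.sub tendsto_const_nhds ?_
    have : Tendsto (fun N => ∑ i ∈ range c, b (N + i)) atTop (nhds (∑ i ∈ range c, (0:ℝ))) := by
      refine tendsto_finset_sum _ fun i _ => ?_
      exact hb.comp (tendsto_add_atTop_nat i)
    simpa using this
  rw [sub_zero] at t2
  exact tendsto_nhds_unique (t1.congr fun N => key N) t2

-- factorization
lemma factor_sq (k l : ℕ) : ((k:ℝ)+1)^2 - ((l:ℝ)+1)^2 = ((k:ℝ) - l) * ((k:ℝ) + l + 2) := by ring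

lemma abs_bound (k l : ℕ) (h : k ≠ l) :
    |1 / (((k:ℝ)+1)^2 - ((l:ℝ)+1)^2)| ≤ 1 / ((k:ℝ) - l)^2 := by
  have hne : ((k:ℝ) - l) ≠ 0 := sub_ne_zero.mpr (by exact_mod_cast h)
  have h1 : |((k:ℝ) - l)| ≤ (k:ℝ) + l + 2 := by
    refine (abs_sub _ _).trans ?_
    rw [Nat.abs_cast, Nat.abs_cast]; linarith
  have h2 : (0:ℝ) < |((k:ℝ) - l)| := abs_pos.mpr hne
  rw [abs_div, abs_one, factor_sq, abs_mul]
  rw [abs_of_pos (by positivity : (0:ℝ) < (k:ℝ) + l + 2)]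
  rw [div_le_div_iff₀ (by positivity) (by positivity)]
  calc 1 * ((k:ℝ) - l)^2 = |((k:ℝ) - l)| * |((k:ℝ) - l)| := by
        rw [one_mul, ← abs_mul, ← sq, abs_of_nonneg (sq_nonneg _)]
    _ ≤ |((k:ℝ) - l)| * ((k:ℝ) + l + 2) := by
        exact mul_le_mul_of_nonneg_left h1 (le_of_lt h2)
    _ = 1 * (|((k:ℝ) - l)| * ((k:ℝ) + l + 2)) := by ring

lemma summ_A (l : ℕ) :
    Summable (fun k : ℕ => if k = l then (0:ℝ) else 1/(((k:ℝ)+1)^2 - ((l:ℝ)+1)^2)) := by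
  refine Summable.of_abs ?_
  refine Summable.of_nonneg_of_le (fun k => abs_nonneg _) (fun k => ?_) (summ_shift_sq l)
  by_cases h : k = l
  · subst h; simp
  · simp only [h, if_false]; exact abs_bound k l h

lemma lemA (l : ℕ) :
    ∑' k : ℕ, (if k = l then (0:ℝ) else 1/(((k:ℝ)+1)^2 - ((l:ℝ)+1)^2))
      = 3 / (4 * ((l:ℝ)+1)^2) := by
  set L : ℝ := (l:ℝ) + 1 with hLdef
  have hL : (0:ℝ) < L := by positivity
  set b : ℕ → ℝ := fun k => (1/(2*L)) * (if k = l then 1/(2*L) else 1/((k:ℝ) - l)) with hbdef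
  have hf : ∀ k, (if k = l then (0:ℝ) else 1/(((k:ℝ)+1)^2 - L^2)) = b k - b (k + (2*l+2)) := by
    intro k
    have hne2 : k + (2*l+2) ≠ l := by omega
    have hcast : ((k + (2*l+2) : ℕ):ℝ) - l = (k:ℝ) + l + 2 := by push_cast; ring
    by_cases h : k = l
    · subst h
      simp only [hbdef, hcast, if_neg hne2, eq_self_iff_true, if_true]
      have h2 : (k:ℝ) + k + 2 = 2 * L := by rw [hLdef]; ring
      rw [h2]; ring
    · simp only [if_neg h, if_neg hne2, hbdef, hcast]
      have hne : ((k:ℝ) - l) ≠ 0 := sub_ne_zero.mpr (by exact_mod_cast h)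
      have hpos : (0:ℝ) < (k:ℝ) + l + 2 := by positivity
      rw [factor_sq k l]
      field_simp
      ring
  have hb0 : Tendsto b atTop (nhds 0) := by
    have h1 : Tendsto (fun k : ℕ => ((k:ℝ) - l)) atTop atTop := by
      have := tendsto_natCast_atTop_atTop (R := ℝ)
      exact tendsto_atTop_add_const_right atTop (-(l:ℝ)) this |>.congr (fun k => by ring)
    have h2 : Tendsto (fun k : ℕ => 1/((k:ℝ) - l)) atTop (nhds 0) := by
      exact h1.inv_tendsto_atTop.congr (fun k => by simp [one_div])
    have h3 : Tendsto (fun k : ℕ => (1/(2*L)) * (1/((k:ℝ) - l))) atTop (nhds ((1/(2*L)) * 0)) :=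
      h2.const_mul _
    rw [mul_zero] at h3
    refine h3.congr' ?_
    filter_upwards [eventually_gt_atTop l] with k hk
    have : k ≠ l := by omega
    simp [hbdef, this]
  have hs := summ_A l
  have := tsum_telescope b (2*l+2) _ hf (by simpa [hLdef] using hs) hb0
  rw [this]
  -- head computation
  have hsplit : ∑ i ∈ range (2*l+2), b i
      = ∑ i ∈ range (l+1), b i + ∑ i ∈ range (l+1), b ((l+1) + i) := by
    have : 2*l+2 = (l+1) + (l+1) := by omega
    rw [this, Finset.sum_range_add]
  have hfirst : ∑ i ∈ range (l+1), b i
      = (1/(2*L)) * (1/(2*L)) + ∑ i ∈ range l, (1/(2*L)) * (1/((i:ℝ) - l)) := by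
    rw [Finset.sum_range_succ]
    simp only [hbdef, if_pos rfl]
    rw [add_comm]
    congr 1
    refine Finset.sum_congr rfl fun i hi => ?_
    simp only [mem_range] at hi
    rw [if_neg (by omega)]
  have hrefl : ∑ i ∈ range l, (1/(2*L)) * (1/((i:ℝ) - l))
      = - ∑ i ∈ range l, (1/(2*L)) * (1/((i:ℝ) + 1)) := by
    rw [← Finset.sum_range_reflect]
    rw [← Finset.sum_neg_distrib]
    refine Finset.sum_congr rfl fun i hi => ?_
    simp only [mem_range] at hi
    have : ((l - 1 - i : ℕ):ℝ) = (l:ℝ) - 1 - i := by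
      have h1 : (l - 1 - i : ℕ) = l - (i+1) := by omega
      rw [h1, Nat.cast_sub (by omega)]; push_cast; ring
    rw [this]
    have : (l:ℝ) - 1 - i - l = -((i:ℝ)+1) := by ring
    rw [this, div_neg, mul_neg]
  have hsecond : ∑ i ∈ range (l+1), b ((l+1) + i)
      = ∑ i ∈ range (l+1), (1/(2*L)) * (1/((i:ℝ) + 1)) := by
    refine Finset.sum_congr rfl fun i hi => ?_
    simp only [hbdef]
    rw [if_neg (by omega)]
    congr 2
    push_cast; ring
  rw [hsplit, hfirst, hrefl, hsecond, Finset.sum_range_succ]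
  have : (l:ℝ) + 1 = L := rfl
  rw [this]
  field_simp
  ring

lemma summ_B (k : ℕ) :
    Summable (fun l : ℕ => if l = k then (0:ℝ)
      else (-1:ℝ)^(l+1)/(((k:ℝ)+1)^2 - ((l:ℝ)+1)^2)) := by
  refine Summable.of_abs ?_
  refine Summable.of_nonneg_of_le (fun l => abs_nonneg _) (fun l => ?_) (summ_shift_sq k)
  by_cases h : l = k
  · subst h; simp
  · simp only [h, if_false]
    have h1 : |(-1:ℝ)^(l+1)/(((k:ℝ)+1)^2 - ((l:ℝ)+1)^2)|
        = |1/(((l:ℝ)+1)^2 - ((k:ℝ)+1)^2)| := by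
      rw [abs_div, abs_div, abs_pow, abs_neg, abs_one, one_pow, abs_sub_comm]
    rw [h1]
    exact abs_bound l k h

lemma lemB (k : ℕ) :
    ∑' l : ℕ, (if l = k then (0:ℝ) else (-1:ℝ)^(l+1)/(((k:ℝ)+1)^2 - ((l:ℝ)+1)^2))
      = -1/(2*((k:ℝ)+1)^2) - (-1:ℝ)^(k+1)/(4*((k:ℝ)+1)^2) := by
  set K : ℝ := (k:ℝ) + 1 with hKdef
  have hK : (0:ℝ) < K := by positivity
  set b : ℕ → ℝ := fun l => (1/(2*K)) *
    (if l = k then -(-1:ℝ)^(k+1)/(2*K) else (-1:ℝ)^(l+1)/((k:ℝ) - l)) with hbdef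
  have hsgn : ∀ l : ℕ, (-1:ℝ)^(l + (2*k+2) + 1) = (-1:ℝ)^(l+1) := by
    intro l
    have : l + (2*k+2) + 1 = (l+1) + 2*(k+1) := by omega
    rw [this, pow_add, pow_mul, neg_one_sq, one_pow, mul_one]
  have hf : ∀ l, (if l = k then (0:ℝ) else (-1:ℝ)^(l+1)/(K^2 - ((l:ℝ)+1)^2))
      = b l - b (l + (2*k+2)) := by
    intro l
    have hne2 : l + (2*k+2) ≠ k := by omega
    have hcast : (k:ℝ) - ((l + (2*k+2) : ℕ):ℝ) = -((k:ℝ) + l + 2) := by push_cast; ring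
    by_cases h : l = k
    · subst h
      simp only [hbdef, hcast, if_neg hne2, eq_self_iff_true, if_true, hsgn]
      have h2 : (l:ℝ) + l + 2 = 2 * K := by rw [hKdef]; ring
      rw [h2, div_neg, mul_neg]
      ring
    · simp only [hbdef, hcast, if_neg h, if_neg hne2, hsgn]
      have hne : ((k:ℝ) - l) ≠ 0 := sub_ne_zero.mpr (by
        exact fun hh => h (by exact_mod_cast hh.symm))
      have hpos : (0:ℝ) < (k:ℝ) + l + 2 := by positivity
      rw [factor_sq k l, div_neg, mul_neg, sub_neg_eq_add]
      field_simp
      ring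
  have hb0 : Tendsto b atTop (nhds 0) := by
    have h1 : Tendsto (fun l : ℕ => ((l:ℝ) - k)) atTop atTop := by
      have := tendsto_natCast_atTop_atTop (R := ℝ)
      exact tendsto_atTop_add_const_right atTop (-(k:ℝ)) this |>.congr (fun l => by ring)
    have h2 : Tendsto (fun l : ℕ => (1/(2*K)) * (1/((l:ℝ) - k))) atTop (nhds 0) := by
      have := (h1.inv_tendsto_atTop).const_mul (1/(2*K))
      rw [mul_zero] at this
      simpa [one_div] using this
    refine squeeze_zero_norm' ?_ h2
    filter_upwards [eventually_gt_atTop k] with l hl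
    have hne : l ≠ k := by omega
    have hpos : (0:ℝ) < (l:ℝ) - k := by
      have : (k:ℝ) < l := by exact_mod_cast hl
      linarith
    have hval : ‖b l‖ = (1/(2*K)) * (1/((l:ℝ) - k)) := by
      simp only [hbdef, if_neg hne]
      rw [Real.norm_eq_abs, abs_mul, abs_div, abs_div, abs_pow, abs_neg, abs_one, one_pow,
        abs_sub_comm, abs_of_pos hpos,
        abs_of_pos (show (0:ℝ) < 2*K by positivity)]
    exact le_of_eq hval
  have hs := summ_B k
  have htel := tsum_telescope b (2*k+2) _ hf (by simpa [hKdef] using hs) hb0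
  rw [htel]
  -- head computation
  have hsplit : ∑ i ∈ range (2*k+2), b i
      = ∑ i ∈ range (k+1), b i + ∑ i ∈ range (k+1), b ((k+1) + i) := by
    have : 2*k+2 = (k+1) + (k+1) := by omega
    rw [this, Finset.sum_range_add]
  have hEone : ∀ i : ℕ, ((-1:ℝ)^i) * ((-1:ℝ)^i) = 1 := by
    intro i; rw [← pow_add]; exact Even.neg_one_pow ⟨i, rfl⟩
  have hfirst : ∑ i ∈ range (k+1), b i
      = (1/(2*K)) * (-(-1:ℝ)^(k+1)/(2*K))
        + (-1:ℝ)^k * ∑ i ∈ range k, (1/(2*K)) * ((-1:ℝ)^i / ((i:ℝ) + 1)) := by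
    rw [Finset.sum_range_succ]
    simp only [hbdef, eq_self_iff_true, if_true]
    rw [add_comm]
    congr 1
    rw [Finset.mul_sum, ← Finset.sum_range_reflect]
    refine Finset.sum_congr rfl fun i hi => ?_
    simp only [mem_range] at hi
    rw [if_neg (by omega)]
    have hc1 : ((k - 1 - i : ℕ):ℝ) = (k:ℝ) - 1 - i := by
      have h1 : (k - 1 - i : ℕ) = k - (i+1) := by omega
      rw [h1, Nat.cast_sub (by omega)]; push_cast; ring
    have hc2 : (k:ℝ) - ((k - 1 - i : ℕ):ℝ) = (i:ℝ) + 1 := by rw [hc1]; ring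
    rw [hc2]
    have hexp : (k - 1 - i) + 1 + i = k := by omega
    have hA : (-1:ℝ)^((k-1-i)+1) * (-1:ℝ)^i = (-1:ℝ)^k := by
      rw [← pow_add, hexp]
    have hA2 : (-1:ℝ)^((k-1-i)+1) = (-1:ℝ)^k * (-1:ℝ)^i := by
      calc (-1:ℝ)^((k-1-i)+1) = (-1:ℝ)^((k-1-i)+1) * ((-1:ℝ)^i * (-1:ℝ)^i) := by
            rw [hEone, mul_one]
        _ = ((-1:ℝ)^((k-1-i)+1) * (-1:ℝ)^i) * (-1:ℝ)^i := by ring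
        _ = (-1:ℝ)^k * (-1:ℝ)^i := by rw [hA]
    rw [hA2]
    ring
  have hsecond : ∑ i ∈ range (k+1), b ((k+1) + i)
      = -(-1:ℝ)^k * ∑ i ∈ range (k+1), (1/(2*K)) * ((-1:ℝ)^i / ((i:ℝ) + 1)) := by
    rw [neg_mul, Finset.mul_sum, ← Finset.sum_neg_distrib]
    refine Finset.sum_congr rfl fun i hi => ?_
    simp only [hbdef]
    rw [if_neg (by omega)]
    have hc : (k:ℝ) - ((k + 1 + i : ℕ):ℝ) = -((i:ℝ) + 1) := by push_cast; ring
    rw [hc]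
    have hexp : k + 1 + i + 1 = (k + i) + 2 := by omega
    have hA : (-1:ℝ)^(k+1+i+1) = (-1:ℝ)^k * (-1:ℝ)^i := by
      rw [hexp, pow_add, pow_add, neg_one_sq, mul_one]
    rw [hA, div_neg, mul_neg]
    ring
  have hs2 := hEone k
  have hpk : (-1:ℝ)^(k+1) = (-1:ℝ)^k * (-1) := pow_succ (-1) k
  have hKk : (k:ℝ) + 1 = K := rfl
  rw [hsplit, hfirst, hsecond, Finset.sum_range_succ, hpk, hKk]
  have hKne : K ≠ 0 := ne_of_gt hK
  field_simp
  linear_combination (-8:ℝ) * hs2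

lemma geom_ident (x y : ℝ) (hxy : y - x ≠ 0) (n : ℕ) (hn : 1 ≤ n) :
    ∑ j ∈ Ico 1 n, x^j * y^(n-j) = (x*y^n - x^n*y)/(y - x) := by
  induction n with
  | zero => omega
  | succ n ih =>
    rcases Nat.lt_or_ge 1 (n+1) with h | h
    · have hn1 : 1 ≤ n := by omega
      rw [Finset.sum_Ico_succ_top hn1]
      have hstep : ∑ j ∈ Ico 1 n, x^j * y^(n+1-j)
          = y * ∑ j ∈ Ico 1 n, x^j * y^(n-j) := by
        rw [Finset.mul_sum]
        refine Finset.sum_congr rfl fun j hj => ?_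
        simp only [mem_Ico] at hj
        have : n + 1 - j = (n - j) + 1 := by omega
        rw [this, pow_succ]
        ring
      rw [hstep, ih hn1]
      have h2 : n + 1 - n = 1 := by omega
      rw [h2, pow_one]
      field_simp
      ring
    · have : n = 0 := by omega
      subst this
      simp

lemma diagF (m k : ℕ) :
    ∑ j ∈ Ico 1 (m+2), (1/((k:ℝ)+1)^(2*j)) * ((-1:ℝ)^(k+1)/((k:ℝ)+1)^(2*(m+2-j)))
      = ((m:ℝ)+1) * ((-1:ℝ)^(k+1)/((k:ℝ)+1)^(2*(m+2))) := by
  have h1 : ∀ j ∈ Ico 1 (m+2), (1/((k:ℝ)+1)^(2*j)) * ((-1:ℝ)^(k+1)/((k:ℝ)+1)^(2*(m+2-j)))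
      = (-1:ℝ)^(k+1)/((k:ℝ)+1)^(2*(m+2)) := by
    intro j hj
    have hj' := Finset.mem_Ico.mp hj
    rw [div_mul_div_comm, one_mul, ← pow_add]
    congr 2
    omega
  rw [Finset.sum_congr rfl h1, Finset.sum_const, Nat.card_Ico, nsmul_eq_mul]
  have : m + 2 - 1 = m + 1 := by omega
  rw [this]
  push_cast
  ring

lemma offdiagF (m k l : ℕ) (h : k ≠ l) :
    ∑ j ∈ Ico 1 (m+2), (1/((k:ℝ)+1)^(2*j)) * ((-1:ℝ)^(l+1)/((l:ℝ)+1)^(2*(m+2-j)))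
      = ((-1:ℝ)^(l+1) * (1/((l:ℝ)+1)^(2*m+2))) * (1/(((k:ℝ)+1)^2 - ((l:ℝ)+1)^2))
        + (-(1/((k:ℝ)+1)^(2*m+2))) * ((-1:ℝ)^(l+1)/(((k:ℝ)+1)^2 - ((l:ℝ)+1)^2)) := by
  have hKpos : (0:ℝ) < (k:ℝ)+1 := by positivity
  have hLpos : (0:ℝ) < (l:ℝ)+1 := by positivity
  have hK0 : ((k:ℝ)+1) ≠ 0 := ne_of_gt hKpos
  have hL0 : ((l:ℝ)+1) ≠ 0 := ne_of_gt hLpos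
  have hKLne : ((k:ℝ) - l) ≠ 0 := sub_ne_zero.mpr (by exact_mod_cast h)
  have hKL2 : ((k:ℝ)+1)^2 - ((l:ℝ)+1)^2 ≠ 0 := by
    have : ((k:ℝ)+1)^2 - ((l:ℝ)+1)^2 = ((k:ℝ) - l) * ((k:ℝ) + l + 2) := by ring
    rw [this]
    exact mul_ne_zero hKLne (by positivity)
  have hyx : (1/((l:ℝ)+1)^2 - 1/((k:ℝ)+1)^2) ≠ 0 := by
    have he : 1/((l:ℝ)+1)^2 - 1/((k:ℝ)+1)^2
        = (((k:ℝ)+1)^2 - ((l:ℝ)+1)^2) / (((k:ℝ)+1)^2 * ((l:ℝ)+1)^2) := by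
      field_simp
    rw [he]
    exact div_ne_zero hKL2 (by positivity)
  have h1 : ∀ j ∈ Ico 1 (m+2), (1/((k:ℝ)+1)^(2*j)) * ((-1:ℝ)^(l+1)/((l:ℝ)+1)^(2*(m+2-j)))
      = (-1:ℝ)^(l+1) * ((1/((k:ℝ)+1)^2)^j * (1/((l:ℝ)+1)^2)^(m+2-j)) := by
    intro j hj
    have hx : (1/((k:ℝ)+1)^2)^j = 1/((k:ℝ)+1)^(2*j) := by
      rw [div_pow, one_pow, ← pow_mul]
    have hy : (1/((l:ℝ)+1)^2)^(m+2-j) = 1/((l:ℝ)+1)^(2*(m+2-j)) := by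
      rw [div_pow, one_pow, ← pow_mul]
    rw [hx, hy]; ring
  rw [Finset.sum_congr rfl h1, ← Finset.mul_sum,
    geom_ident (1/((k:ℝ)+1)^2) (1/((l:ℝ)+1)^2) hyx (m+2) (by omega)]
  suffices hS : ((1/((k:ℝ)+1)^2)*(1/((l:ℝ)+1)^2)^(m+2) - (1/((k:ℝ)+1)^2)^(m+2)*(1/((l:ℝ)+1)^2))
      / (1/((l:ℝ)+1)^2 - 1/((k:ℝ)+1)^2)
      = (1/((l:ℝ)+1)^(2*m+2)) * (1/(((k:ℝ)+1)^2 - ((l:ℝ)+1)^2))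
        - (1/((k:ℝ)+1)^(2*m+2)) * (1/(((k:ℝ)+1)^2 - ((l:ℝ)+1)^2)) by
    rw [hS]; ring
  have hKm : ((k:ℝ)+1)^(2*m+2) = (((k:ℝ)+1)^2)^(m+1) := by
    rw [← pow_mul]; congr 1
  have hLm : ((l:ℝ)+1)^(2*m+2) = (((l:ℝ)+1)^2)^(m+1) := by
    rw [← pow_mul]; congr 1
  rw [hKm, hLm]
  simp only [div_pow, one_pow]
  field_simp
  ring

/-- The Riemann zeta value `ζ(m) = Σ_{j ≥ 1} 1/j^m`. -/
noncomputable def zetaVal (m : ℕ) : ℝ := ∑' k : ℕ, 1 / ((k : ℝ) + 1) ^ m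

/-- The alternating zeta value `ζ(m̄) = Σ_{j ≥ 1} (-1)^j/j^m`. -/
noncomputable def zetaAlt (m : ℕ) : ℝ := ∑' k : ℕ, (-1 : ℝ) ^ (k + 1) / ((k : ℝ) + 1) ^ m

noncomputable def G1f (m : ℕ) (p : ℕ × ℕ) : ℝ :=
  ((-1:ℝ)^(p.2+1) * (1/((p.2:ℝ)+1)^(2*m+2))) *
    (if p.1 = p.2 then 0 else 1/(((p.1:ℝ)+1)^2 - ((p.2:ℝ)+1)^2))

lemma hMswap_summ : Summable (fun q : ℕ×ℕ => (1/((q.1:ℝ)+1)^2) * (1/((q.2:ℝ)-(q.1:ℝ))^2)) := by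
  have hpos : ∀ q : ℕ×ℕ, 0 ≤ (1/((q.1:ℝ)+1)^2) * (1/((q.2:ℝ)-(q.1:ℝ))^2) :=
    fun q => by positivity
  refine (summable_prod_of_nonneg hpos).mpr ⟨?_, ?_⟩
  · intro l
    dsimp only
    exact (summ_shift_sq l).mul_left _
  · refine Summable.of_nonneg_of_le (fun l => tsum_nonneg fun k => by positivity)
      (fun l => ?_) (((summ_pow 2 le_rfl).mul_right (2*Z)))
    dsimp only
    rw [tsum_mul_left]
    exact mul_le_mul_of_nonneg_left (tsum_shift_sq_le l) (by positivity)

lemma hM_summ : Summable (fun p : ℕ×ℕ => (1/((p.2:ℝ)+1)^2) * (1/((p.1:ℝ)-(p.2:ℝ))^2)) :=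
  hMswap_summ.prod_symm

lemma G1f_bound (m : ℕ) (p : ℕ × ℕ) :
    |G1f m p| ≤ (1/((p.2:ℝ)+1)^2) * (1/((p.1:ℝ)-(p.2:ℝ))^2) := by
  obtain ⟨k, l⟩ := p
  simp only [G1f]
  by_cases h : k = l
  · subst h
    simp [sub_self]
  · rw [if_neg h, abs_mul, abs_mul, abs_pow, abs_neg, abs_one, one_pow, one_mul]
    have hL1 : (1:ℝ) ≤ (l:ℝ) + 1 := by
      have : (0:ℝ) ≤ (l:ℝ) := Nat.cast_nonneg l
      linarith
    have h1 : |1/((l:ℝ)+1)^(2*m+2)| ≤ 1/((l:ℝ)+1)^2 := by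
      rw [abs_of_pos (by positivity)]
      apply one_div_le_one_div_of_le (by positivity)
      exact pow_le_pow_right₀ hL1 (by omega)
    have h2 := abs_bound k l h
    calc |1/((l:ℝ)+1)^(2*m+2)| * |1/(((k:ℝ)+1)^2 - ((l:ℝ)+1)^2)|
        ≤ (1/((l:ℝ)+1)^2) * (1/((k:ℝ)-l)^2) := by
          exact mul_le_mul h1 h2 (abs_nonneg _) (by positivity)
      _ = (1/((l:ℝ)+1)^2) * (1/((k:ℝ)-(l:ℝ))^2) := rfl

lemma G1f_summ (m : ℕ) : Summable (G1f m) := by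
  refine Summable.of_abs ?_
  exact Summable.of_nonneg_of_le (fun p => abs_nonneg _) (fun p => G1f_bound m p) hM_summ

theorem A1_weight0 (n : ℕ) (hn : 2 ≤ n) :
    ∑ j ∈ Finset.Ico 1 n, zetaVal (2 * j) * zetaAlt (2 * (n - j)) =
      (1 / 2) * zetaVal (2 * n) + (n : ℝ) * zetaAlt (2 * n) := by
  obtain ⟨m, rfl⟩ : ∃ m, n = m + 2 := ⟨n - 2, by omega⟩
  -- basic summabilities
  have hsum_val : Summable (fun k : ℕ => 1/((k:ℝ)+1)^(2*(m+2))) := summ_pow _ (by omega)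
  have hsum_alt : Summable (fun k : ℕ => (-1:ℝ)^(k+1)/((k:ℝ)+1)^(2*(m+2))) :=
    summ_alt _ (by omega)
  have hG1 : Summable (G1f m) := G1f_summ m
  have hG1k : ∀ k, Summable (fun l => G1f m (k, l)) := fun k => hG1.prod_factor k
  have hG1l : ∀ l, Summable (fun k => G1f m (k, l)) := fun l => hG1.prod_symm.prod_factor l
  have hg1col : HasSum (fun k => ∑' l, G1f m (k, l)) (∑' p, G1f m p) :=
    HasSum.prod_fiberwise hG1.hasSum (fun k => (hG1k k).hasSum)
  -- W
  set W : ℕ → ℝ := fun k => ((m:ℝ)+1) * ((-1:ℝ)^(k+1)/((k:ℝ)+1)^(2*(m+2)))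
      + ((1/2) * (1/((k:ℝ)+1)^(2*(m+2))) + (1/4) * ((-1:ℝ)^(k+1)/((k:ℝ)+1)^(2*(m+2)))) with hW
  have hWsumm : Summable W :=
    (hsum_alt.mul_left _).add ((hsum_val.mul_left _).add (hsum_alt.mul_left _))
  have hWtsum : ∑' k, W k = ((m:ℝ)+1) * zetaAlt (2*(m+2))
      + ((1/2) * zetaVal (2*(m+2)) + (1/4) * zetaAlt (2*(m+2))) := by
    rw [hW, Summable.tsum_add (hsum_alt.mul_left _) ((hsum_val.mul_left _).add (hsum_alt.mul_left _)),
      Summable.tsum_add (hsum_val.mul_left _) (hsum_alt.mul_left _),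
      tsum_mul_left, tsum_mul_left, tsum_mul_left, zetaVal, zetaAlt]
  -- step 1 : LHS = ∑' k, ∑' l, F k l
  have e1 : ∀ j ∈ Ico 1 (m+2), zetaVal (2*j) * zetaAlt (2*(m+2-j))
      = ∑' (k:ℕ), (1/((k:ℝ)+1)^(2*j)) * zetaAlt (2*(m+2-j)) := by
    intro j hj
    rw [zetaVal, tsum_mul_right]
  have step1 : ∑ j ∈ Finset.Ico 1 (m+2), zetaVal (2*j) * zetaAlt (2*(m+2-j))
      = ∑' (k:ℕ), ∑' (l:ℕ), ∑ j ∈ Ico 1 (m+2),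
          (1/((k:ℝ)+1)^(2*j)) * ((-1:ℝ)^(l+1)/((l:ℝ)+1)^(2*(m+2-j))) := by
    rw [Finset.sum_congr rfl e1, ← Summable.tsum_finsetSum (fun j hj => ?_)]
    swap
    · have hj' := Finset.mem_Ico.mp hj
      exact (summ_pow (2*j) (by omega)).mul_right _
    refine tsum_congr fun k => ?_
    have e2 : ∀ j ∈ Ico 1 (m+2), (1/((k:ℝ)+1)^(2*j)) * zetaAlt (2*(m+2-j))
        = ∑' (l:ℕ), (1/((k:ℝ)+1)^(2*j)) * ((-1:ℝ)^(l+1)/((l:ℝ)+1)^(2*(m+2-j))) := by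
      intro j hj
      rw [zetaAlt, tsum_mul_left]
    rw [Finset.sum_congr rfl e2, ← Summable.tsum_finsetSum (fun j hj => ?_)]
    have hj' := Finset.mem_Ico.mp hj
    exact (summ_alt (2*(m+2-j)) (by omega)).mul_left _
  -- per-k evaluation
  have hper : ∀ k : ℕ, (∑' (l:ℕ), ∑ j ∈ Ico 1 (m+2),
      (1/((k:ℝ)+1)^(2*j)) * ((-1:ℝ)^(l+1)/((l:ℝ)+1)^(2*(m+2-j))))
      = W k + ∑' l, G1f m (k, l) := by
    intro k
    have hKpos : (0:ℝ) < (k:ℝ)+1 := by positivity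
    have hK0 : ((k:ℝ)+1) ≠ 0 := ne_of_gt hKpos
    have hpt : ∀ l : ℕ, (∑ j ∈ Ico 1 (m+2),
        (1/((k:ℝ)+1)^(2*j)) * ((-1:ℝ)^(l+1)/((l:ℝ)+1)^(2*(m+2-j))))
        = (if l = k then ((m:ℝ)+1) * ((-1:ℝ)^(k+1)/((k:ℝ)+1)^(2*(m+2))) else 0)
          + (G1f m (k, l) + (-(1/((k:ℝ)+1)^(2*m+2)))
              * (if l = k then 0 else (-1:ℝ)^(l+1)/(((k:ℝ)+1)^2 - ((l:ℝ)+1)^2))) := by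
      intro l
      rcases eq_or_ne l k with hlk | hlk
      · rw [hlk]
        rw [if_pos rfl, if_pos rfl, mul_zero, add_zero]
        have hG10 : G1f m (k, k) = 0 := by
          simp [G1f]
        rw [hG10, add_zero]
        exact diagF m k
      · rw [if_neg hlk, if_neg hlk, zero_add]
        have hG1v : G1f m (k, l)
            = ((-1:ℝ)^(l+1) * (1/((l:ℝ)+1)^(2*m+2)))
              * (1/(((k:ℝ)+1)^2 - ((l:ℝ)+1)^2)) := by
          simp only [G1f]
          rw [if_neg (fun he => hlk he.symm)]
        rw [hG1v]
        exact offdiagF m k l (fun he => hlk he.symm)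
    -- split the tsum
    have hD : Summable (fun l : ℕ => if l = k
        then ((m:ℝ)+1) * ((-1:ℝ)^(k+1)/((k:ℝ)+1)^(2*(m+2))) else 0) := by
      apply summable_of_ne_finset_zero (s := {k})
      intro l hl
      rw [if_neg (by simpa using hl)]
    have hG2 : Summable (fun l : ℕ => (-(1/((k:ℝ)+1)^(2*m+2)))
        * (if l = k then 0 else (-1:ℝ)^(l+1)/(((k:ℝ)+1)^2 - ((l:ℝ)+1)^2))) :=
      (summ_B k).mul_left _
    rw [tsum_congr hpt, Summable.tsum_add hD ((hG1k k).add hG2), Summable.tsum_add (hG1k k) hG2,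
      tsum_eq_single k (fun l hl => if_neg hl), if_pos rfl, tsum_mul_left, lemB k]
    rw [hW]
    have hKm : ((k:ℝ)+1)^(2*(m+2)) = ((k:ℝ)+1)^(2*m+2) * ((k:ℝ)+1)^2 := by
      rw [← pow_add]; congr 1
    rw [hKm]
    field_simp
    ring
  -- assemble
  have hg1tot : ∑' (k:ℕ), ∑' (l:ℕ), G1f m (k, l) = (3/4) * zetaAlt (2*(m+2)) := by
    have hcomm : ∑' (l:ℕ), ∑' (k:ℕ), G1f m (k, l) = ∑' (k:ℕ), ∑' (l:ℕ), G1f m (k, l) :=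
      Summable.tsum_comm' hG1 hG1k hG1l
    rw [← hcomm]
    have h2 : ∀ l : ℕ, (∑' (k:ℕ), G1f m (k, l))
        = ((-1:ℝ)^(l+1) * (1/((l:ℝ)+1)^(2*m+2))) * (3/(4*((l:ℝ)+1)^2)) := by
      intro l
      have hptk : ∀ k : ℕ, G1f m (k, l) = ((-1:ℝ)^(l+1) * (1/((l:ℝ)+1)^(2*m+2)))
          * (if k = l then (0:ℝ) else 1/(((k:ℝ)+1)^2 - ((l:ℝ)+1)^2)) := fun k => rfl
      rw [tsum_congr hptk, tsum_mul_left, lemA l]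
    rw [tsum_congr h2]
    have h3 : ∀ l : ℕ, ((-1:ℝ)^(l+1) * (1/((l:ℝ)+1)^(2*m+2))) * (3/(4*((l:ℝ)+1)^2))
        = (3/4) * ((-1:ℝ)^(l+1)/((l:ℝ)+1)^(2*(m+2))) := by
      intro l
      have hLpos : (0:ℝ) < (l:ℝ)+1 := by positivity
      have hLm : ((l:ℝ)+1)^(2*(m+2)) = ((l:ℝ)+1)^(2*m+2) * ((l:ℝ)+1)^2 := by
        rw [← pow_add]; congr 1
      rw [hLm]
      field_simp
    rw [tsum_congr h3, tsum_mul_left, zetaAlt]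
  -- finish
  have hfin : ∑ j ∈ Finset.Ico 1 (m+2), zetaVal (2*j) * zetaAlt (2*(m+2-j))
      = ∑' (k:ℕ), W k + ∑' (k:ℕ), ∑' (l:ℕ), G1f m (k, l) := by
    rw [step1, tsum_congr hper]
    exact Summable.tsum_add hWsumm hg1col.summable
  rw [hfin, hWtsum, hg1tot]
  push_cast
  ring
end

section
/- For every positive integer n ≥ 2, Σ_{j=1}^{n-1} j²·ζ(2j)ζ(2n-2j) = (n(8n²+6n+1)/24)ζ(2n) − ((2n-3)/2)ζ(2)ζ(2n-2). -/
open PowerSeries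

lemma deriv_exp' : (d⁄dX ℚ) (exp ℚ) = exp ℚ := by
  ext n
  simp [coeff_derivative, coeff_exp, Nat.factorial_succ]
  field_simp

lemma key_ps : X * ((d⁄dX ℚ) (bernoulliPowerSeries ℚ)) + X * bernoulliPowerSeries ℚ
    + bernoulliPowerSeries ℚ ^ 2 = bernoulliPowerSeries ℚ := by
  set B := bernoulliPowerSeries ℚ with hB
  have h : B * (exp ℚ - 1) = X := bernoulliPowerSeries_mul_exp_sub_one ℚ
  have hd : (d⁄dX ℚ) (B * (exp ℚ - 1)) = (d⁄dX ℚ) X := by rw [h]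
  rw [Derivation.leibniz, derivative_X, map_sub, deriv_exp', Derivation.map_one_eq_zero,
    sub_zero, smul_eq_mul, smul_eq_mul] at hd
  -- hd : B * exp ℚ + (exp ℚ - 1) * (d⁄dX ℚ) B = 1
  have hd2 : B * (B * exp ℚ) + B * ((exp ℚ - 1) * (d⁄dX ℚ) B) = B := by
    rw [← mul_add, hd, mul_one]
  have h3 : B * ((exp ℚ - 1) * (d⁄dX ℚ) B) = X * (d⁄dX ℚ) B := by
    rw [← mul_assoc, mul_comm B, mul_comm (exp ℚ - 1) B, h]
  have h4 : B * (B * exp ℚ) = B ^ 2 + X * B := by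
    have h5 : B * (B * exp ℚ) = B * (B * (exp ℚ - 1)) + B ^ 2 := by ring
    rw [h5, h, mul_comm B X, sq]
    ring
  rw [h3, h4] at hd2
  linear_combination hd2

noncomputable def cB (k : ℕ) : ℚ := bernoulli k / (Nat.factorial k : ℚ)

lemma coeff_B (k : ℕ) : (coeff k) (bernoulliPowerSeries ℚ) = cB k := by
  simp [bernoulliPowerSeries, cB]

lemma c_ident (n : ℕ) :
    cB (n+1) * (n+1) + cB n + ∑ j ∈ Finset.range (n+2), cB j * cB (n+1-j) = cB (n+1) := by
  have := congrArg (coeff (n+1)) key_ps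
  rw [map_add, map_add, coeff_succ_X_mul, coeff_succ_X_mul, coeff_derivative, sq,
    coeff_mul, Finset.Nat.sum_antidiagonal_eq_sum_range_succ_mk] at this
  simpa [coeff_B] using this

lemma cB_odd (j : ℕ) (h : Odd j) (h1 : 1 < j) : cB j = 0 := by
  rw [cB, bernoulli_eq_bernoulli'_of_ne_one (by omega), bernoulli'_eq_zero_of_odd h h1]
  simp

lemma cB_zero : cB 0 = 1 := by simp [cB]

lemma c_even_sum (m : ℕ) (hm : 2 ≤ m) :
    ∑ k ∈ Finset.Ico 1 m, cB (2*k) * cB (2*m - 2*k) = -(2*(m:ℚ)+1) * cB (2*m) := by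
  have H := c_ident (2*m - 1)
  have h1 : 2*m - 1 + 1 = 2*m := by omega
  have h2 : 2*m - 1 + 2 = 2*m + 1 := by omega
  rw [h1, h2] at H
  have hodd : cB (2*m-1) = 0 := cB_odd _ ⟨m-1, by omega⟩ (by omega)
  rw [hodd] at H
  have hsplit : ∑ j ∈ Finset.range (2*m+1), cB j * cB (2*m - j)
      = ∑ k ∈ Finset.range (m+1), cB (2*k) * cB (2*m - 2*k) := by
    rw [← Finset.sum_filter_add_sum_filter_not (Finset.range (2*m+1)) (fun j => Even j)]
    have hodd0 : ∑ j ∈ (Finset.range (2*m+1)).filter (fun j => ¬ Even j),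
        cB j * cB (2*m - j) = 0 := by
      apply Finset.sum_eq_zero
      intro j hj
      simp only [Finset.mem_filter, Finset.mem_range] at hj
      have hoj : Odd j := Nat.not_even_iff_odd.mp hj.2
      obtain ⟨r0, hr0⟩ := hoj
      rcases Nat.lt_or_ge j 2 with h | h
      · have : j = 1 := by omega
        subst this
        rw [hodd, mul_zero]
      · rw [cB_odd j ⟨r0, hr0⟩ (by omega), zero_mul]
    rw [hodd0, add_zero]
    refine Finset.sum_nbij' (fun j => j / 2) (fun k => 2 * k) ?_ ?_ ?_ ?_ ?_
    · intro j hj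
      simp only [Finset.mem_filter, Finset.mem_range] at hj ⊢
      obtain ⟨h1', r, hr⟩ := hj
      omega
    · intro k hk
      simp only [Finset.mem_range] at hk
      simp only [Finset.mem_filter, Finset.mem_range]
      exact ⟨by omega, ⟨k, by omega⟩⟩
    · intro j hj
      simp only [Finset.mem_filter, Finset.mem_range] at hj
      obtain ⟨-, r, hr⟩ := hj
      show 2 * (j / 2) = j
      omega
    · intro k hk
      simp only [Finset.mem_range] at hk
      show 2 * k / 2 = k
      omega
    · intro j hj
      simp only [Finset.mem_filter, Finset.mem_range] at hj
      obtain ⟨-, r, hr⟩ := hj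
      have h2j : 2 * (j / 2) = j := by omega
      rw [h2j]
  rw [hsplit, Finset.sum_range_succ, Finset.range_eq_Ico,
    Finset.sum_eq_sum_Ico_succ_bot (by omega : 0 < m)] at H
  have hc0 : cB 0 = 1 := cB_zero
  have hmm : 2*m - 2*m = 0 := by omega
  have hz : (2:ℕ)*0 = 0 := rfl
  rw [hmm, hz, hc0] at H
  have hcast : ((2*m - 1 : ℕ) : ℚ) + 1 = 2*(m:ℚ) := by
    have : ((2*m - 1 : ℕ) : ℚ) = 2*(m:ℚ) - 1 := by
      push_cast [Nat.cast_sub (by omega : 1 ≤ 2*m)]; ring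
    rw [this]; ring
  rw [hcast] at H
  norm_num at H
  linear_combination H

noncomputable def qB (m : ℕ) : ℚ := (-1)^(m+1) * 2^(2*m-1) * cB (2*m)

lemma qB_mul (m k : ℕ) (h1 : 1 ≤ k) (h2 : k < m) :
    qB k * qB (m - k) = (-1)^m * 2^(2*m-2) * (cB (2*k) * cB (2*m - 2*k)) := by
  have hmk : 2*(m-k) = 2*m - 2*k := by omega
  rw [qB, qB, hmk]
  have hs : ((-1:ℚ))^(k+1) * (-1)^((m-k)+1) = (-1)^m := by
    rw [← pow_add]
    have : k+1+((m-k)+1) = m + 2 := by omega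
    rw [this, pow_add]
    norm_num
  have hp : ((2:ℚ))^(2*k-1) * 2^(2*m-2*k-1) = 2^(2*m-2) := by
    rw [← pow_add]
    congr 1
    omega
  calc (-1:ℚ)^(k+1) * 2^(2*k-1) * cB (2*k) * ((-1)^((m-k)+1) * 2^(2*m-2*k-1) * cB (2*m-2*k))
      = ((-1:ℚ)^(k+1) * (-1)^((m-k)+1)) * ((2:ℚ)^(2*k-1) * 2^(2*m-2*k-1)) *
        (cB (2*k) * cB (2*m - 2*k)) := by ring
    _ = _ := by rw [hs, hp]

lemma qB_euler (m : ℕ) (hm : 2 ≤ m) :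
    ∑ k ∈ Finset.Ico 1 m, qB k * qB (m - k) = ((m:ℚ) + 1/2) * qB m := by
  have h1 : ∑ k ∈ Finset.Ico 1 m, qB k * qB (m - k)
      = (-1)^m * 2^(2*m-2) * ∑ k ∈ Finset.Ico 1 m, cB (2*k) * cB (2*m - 2*k) := by
    rw [Finset.mul_sum]
    apply Finset.sum_congr rfl
    intro k hk
    rw [Finset.mem_Ico] at hk
    exact qB_mul m k hk.1 hk.2
  rw [h1, c_even_sum m hm, qB]
  have hp : (2:ℚ)^(2*m-1) = 2 * 2^(2*m-2) := by
    rw [← pow_succ']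
    congr 1
    omega
  rw [hp]
  ring

lemma qB_weight2 (n : ℕ) (hn : 2 ≤ n) :
    ∑ j ∈ Finset.Ico 1 n, (j:ℚ)^2 * (qB j * qB (n-j)) =
      (n:ℚ)*(8*(n:ℚ)^2+6*(n:ℚ)+1)/24 * qB n - (2*(n:ℚ)-3)/2 * (qB 1 * qB (n-1)) := by
  set Dom := (Finset.Ico 1 n ×ˢ Finset.Ico 1 n).filter (fun p => p.1 + p.2 < n) with hDom
  -- conversion between flat and nested sums
  have conv : ∀ f : ℕ → ℕ → ℚ, ∑ p ∈ Dom, f p.1 p.2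
      = ∑ c ∈ Finset.Ico 1 n, ∑ a ∈ Finset.Ico 1 (n - c), f c a := by
    intro f
    rw [hDom, Finset.sum_filter, Finset.sum_product]
    apply Finset.sum_congr rfl
    intro c hc
    rw [Finset.mem_Ico] at hc
    rw [← Finset.sum_filter]
    congr 1
    ext a
    simp only [Finset.mem_filter, Finset.mem_Ico]
    omega
  have memDom : ∀ p : ℕ × ℕ, p ∈ Dom ↔ (1 ≤ p.1 ∧ 1 ≤ p.2 ∧ p.1 + p.2 < n) := by
    intro p
    rw [hDom]
    simp only [Finset.mem_filter, Finset.mem_product, Finset.mem_Ico]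
    omega
  -- helper: split top element of Ico 1 n
  have split : ∀ (g : ℕ → ℚ), ∑ c ∈ Finset.Ico 1 n, g c
      = ∑ c ∈ Finset.Ico 1 (n-1), g c + g (n-1) := by
    intro g
    have hh : Finset.Ico 1 n = Finset.Ico 1 ((n-1)+1) := by congr 1; omega
    rw [hh, Finset.sum_Ico_succ_top (by omega)]
  -- Euler
  have hS0v : ∑ j ∈ Finset.Ico 1 n, qB j * qB (n - j) = ((n:ℚ)+1/2) * qB n := qB_euler n hn
  -- reflection
  have h1 : ∑ j ∈ Finset.Ico 1 n, (j:ℚ) * (qB j * qB (n - j))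
      = ∑ j ∈ Finset.Ico 1 n, ((n - j : ℕ):ℚ) * (qB j * qB (n - j)) := by
    refine Finset.sum_nbij' (fun j => n - j) (fun j => n - j) ?_ ?_ ?_ ?_ ?_
    · intro a ha; rw [Finset.mem_Ico] at ha; show n - a ∈ Finset.Ico 1 n
      rw [Finset.mem_Ico]; omega
    · intro a ha; rw [Finset.mem_Ico] at ha; show n - a ∈ Finset.Ico 1 n
      rw [Finset.mem_Ico]; omega
    · intro a ha; rw [Finset.mem_Ico] at ha; show n - (n - a) = a; omega
    · intro a ha; rw [Finset.mem_Ico] at ha; show n - (n - a) = a; omega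
    · intro a ha
      rw [Finset.mem_Ico] at ha
      show (a:ℚ) * (qB a * qB (n - a)) = ((n - (n - a) : ℕ):ℚ) * (qB (n - a) * qB (n - (n - a)))
      have h2 : n - (n - a) = a := by omega
      rw [h2]; ring
  have hrefl : (∑ j ∈ Finset.Ico 1 n, (j:ℚ) * (qB j * qB (n - j)))
      + (∑ j ∈ Finset.Ico 1 n, (j:ℚ) * (qB j * qB (n - j)))
      = (n:ℚ) * ∑ j ∈ Finset.Ico 1 n, qB j * qB (n - j) := by
    nth_rewrite 2 [h1]
    rw [Finset.mul_sum, ← Finset.sum_add_distrib]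
    apply Finset.sum_congr rfl
    intro j hj
    rw [Finset.mem_Ico] at hj
    have hc : ((n - j : ℕ):ℚ) = (n:ℚ) - (j:ℚ) := by
      push_cast [Nat.cast_sub (by omega : j ≤ n)]; ring
    rw [hc]; ring
  -- evaluation of weighted triple sums
  have evalw : ∀ w : ℕ → ℚ,
      (∑ p ∈ Dom, w p.1 * (qB p.2 * qB (n - p.1 - p.2) * qB p.1))
      = (∑ c ∈ Finset.Ico 1 n, w c * qB c * ((((n - c : ℕ):ℚ) + 1/2) * qB (n - c)))
        - w (n-1) * qB (n-1) * (((1:ℚ) + 1/2) * qB 1) := by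
    intro w
    have e1 := conv (fun c a => w c * (qB a * qB (n - c - a) * qB c))
    beta_reduce at e1
    rw [e1]
    have e2 : ∀ c ∈ Finset.Ico 1 (n-1),
        ∑ a ∈ Finset.Ico 1 (n - c), w c * (qB a * qB (n - c - a) * qB c)
        = w c * qB c * ((((n - c : ℕ):ℚ) + 1/2) * qB (n - c)) := by
      intro c hc
      rw [Finset.mem_Ico] at hc
      have e3 : ∑ a ∈ Finset.Ico 1 (n - c), w c * (qB a * qB (n - c - a) * qB c)
          = w c * qB c * ∑ a ∈ Finset.Ico 1 (n - c), qB a * qB (n - c - a) := by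
        rw [Finset.mul_sum]
        apply Finset.sum_congr rfl
        intro a _; ring
      rw [e3, qB_euler (n - c) (by omega)]
    rw [split (fun c => ∑ a ∈ Finset.Ico 1 (n - c), w c * (qB a * qB (n - c - a) * qB c)),
        split (fun c => w c * qB c * ((((n - c : ℕ):ℚ) + 1/2) * qB (n - c)))]
    beta_reduce
    rw [Finset.sum_congr rfl e2]
    have htop1 : ∑ a ∈ Finset.Ico 1 (n - (n-1)), w (n-1) * (qB a * qB (n - (n-1) - a) * qB (n-1)) = 0 := by
      have : n - (n-1) = 1 := by omega
      rw [this]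
      simp
    have htop2 : ((n - (n-1) : ℕ):ℚ) = 1 := by
      have : n - (n-1) = 1 := by omega
      rw [this]; norm_num
    have htop3 : n - (n-1) = 1 := by omega
    rw [htop1, htop2, htop3]
    ring
  -- the three bijections / symmetry
  have hac : (∑ p ∈ Dom, (p.2:ℚ) * (qB p.2 * qB (n - p.1 - p.2) * qB p.1))
      = ∑ p ∈ Dom, (p.1:ℚ) * (qB p.2 * qB (n - p.1 - p.2) * qB p.1) := by
    refine Finset.sum_nbij' (fun p => (p.2, p.1)) (fun p => (p.2, p.1)) ?_ ?_ ?_ ?_ ?_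
    · intro p hp; rw [memDom] at hp; rw [memDom]; show 1 ≤ p.2 ∧ 1 ≤ p.1 ∧ p.2 + p.1 < n; omega
    · intro p hp; rw [memDom] at hp; rw [memDom]; show 1 ≤ p.2 ∧ 1 ≤ p.1 ∧ p.2 + p.1 < n; omega
    · intro p _; rfl
    · intro p _; rfl
    · intro p hp
      rw [memDom] at hp
      show (p.2:ℚ) * (qB p.2 * qB (n - p.1 - p.2) * qB p.1)
        = (p.2:ℚ) * (qB p.1 * qB (n - p.2 - p.1) * qB p.2)
      have : n - p.2 - p.1 = n - p.1 - p.2 := by omega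
      rw [this]; ring
  have hbc : (∑ p ∈ Dom, ((n - p.1 - p.2 : ℕ):ℚ) * (qB p.2 * qB (n - p.1 - p.2) * qB p.1))
      = ∑ p ∈ Dom, (p.1:ℚ) * (qB p.2 * qB (n - p.1 - p.2) * qB p.1) := by
    refine Finset.sum_nbij' (fun p => (n - p.1 - p.2, p.2)) (fun p => (n - p.1 - p.2, p.2)) ?_ ?_ ?_ ?_ ?_
    · intro p hp; rw [memDom] at hp; rw [memDom]
      show 1 ≤ n - p.1 - p.2 ∧ 1 ≤ p.2 ∧ (n - p.1 - p.2) + p.2 < n; omega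
    · intro p hp; rw [memDom] at hp; rw [memDom]
      show 1 ≤ n - p.1 - p.2 ∧ 1 ≤ p.2 ∧ (n - p.1 - p.2) + p.2 < n; omega
    · intro p hp; rw [memDom] at hp
      show (n - (n - p.1 - p.2) - p.2, p.2) = p
      have h2 : n - (n - p.1 - p.2) - p.2 = p.1 := by omega
      rw [h2]
    · intro p hp; rw [memDom] at hp
      show (n - (n - p.1 - p.2) - p.2, p.2) = p
      have h2 : n - (n - p.1 - p.2) - p.2 = p.1 := by omega
      rw [h2]
    · intro p hp
      rw [memDom] at hp
      show ((n - p.1 - p.2 : ℕ):ℚ) * (qB p.2 * qB (n - p.1 - p.2) * qB p.1)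
        = ((n - p.1 - p.2 : ℕ):ℚ) * (qB p.2 * qB (n - (n - p.1 - p.2) - p.2) * qB (n - p.1 - p.2))
      have h2 : n - (n - p.1 - p.2) - p.2 = p.1 := by omega
      rw [h2]; ring
  have htrip : (∑ p ∈ Dom, (p.1:ℚ) * (qB p.2 * qB (n - p.1 - p.2) * qB p.1))
      + (∑ p ∈ Dom, (p.1:ℚ) * (qB p.2 * qB (n - p.1 - p.2) * qB p.1))
      + (∑ p ∈ Dom, (p.1:ℚ) * (qB p.2 * qB (n - p.1 - p.2) * qB p.1))
      = (n:ℚ) * ∑ p ∈ Dom, (qB p.2 * qB (n - p.1 - p.2) * qB p.1) := by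
    nth_rewrite 1 [← hac]
    nth_rewrite 2 [← hbc]
    rw [Finset.mul_sum, ← Finset.sum_add_distrib, ← Finset.sum_add_distrib]
    apply Finset.sum_congr rfl
    intro p hp
    rw [memDom] at hp
    have h2 : ((n - p.1 - p.2 : ℕ):ℚ) = (n:ℚ) - (p.1:ℚ) - (p.2:ℚ) := by
      push_cast [Nat.cast_sub (by omega : p.2 ≤ n - p.1), Nat.cast_sub (by omega : p.1 ≤ n)]
      ring
    rw [h2]; ring
  -- assemble
  have hYc1 := evalw (fun c => (c:ℚ))
  have hY01 := evalw (fun _ => (1:ℚ))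
  beta_reduce at hYc1 hY01
  have hY0lhs : (∑ p ∈ Dom, (1:ℚ) * (qB p.2 * qB (n - p.1 - p.2) * qB p.1))
      = ∑ p ∈ Dom, (qB p.2 * qB (n - p.1 - p.2) * qB p.1) := by
    apply Finset.sum_congr rfl; intro p _; rw [one_mul]
  rw [hY0lhs] at hY01
  have hW1 : ∑ c ∈ Finset.Ico 1 n, (c:ℚ) * qB c * ((((n - c : ℕ):ℚ) + 1/2) * qB (n - c))
      = ((n:ℚ)+1/2) * (∑ j ∈ Finset.Ico 1 n, (j:ℚ) * (qB j * qB (n - j)))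
        - ∑ j ∈ Finset.Ico 1 n, (j:ℚ)^2 * (qB j * qB (n - j)) := by
    rw [Finset.mul_sum, ← Finset.sum_sub_distrib]
    apply Finset.sum_congr rfl
    intro c hc; rw [Finset.mem_Ico] at hc
    have hcst : ((n - c : ℕ):ℚ) = (n:ℚ) - c := by
      push_cast [Nat.cast_sub (by omega : c ≤ n)]; ring
    rw [hcst]; ring
  have hW0 : ∑ c ∈ Finset.Ico 1 n, (1:ℚ) * qB c * ((((n - c : ℕ):ℚ) + 1/2) * qB (n - c))
      = ((n:ℚ)+1/2) * (∑ j ∈ Finset.Ico 1 n, qB j * qB (n - j))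
        - ∑ j ∈ Finset.Ico 1 n, (j:ℚ) * (qB j * qB (n - j)) := by
    rw [Finset.mul_sum, ← Finset.sum_sub_distrib]
    apply Finset.sum_congr rfl
    intro c hc; rw [Finset.mem_Ico] at hc
    have hcst : ((n - c : ℕ):ℚ) = (n:ℚ) - c := by
      push_cast [Nat.cast_sub (by omega : c ≤ n)]; ring
    rw [hcst]; ring
  have hn1 : ((n-1:ℕ):ℚ) = (n:ℚ) - 1 := by
    push_cast [Nat.cast_sub (by omega : 1 ≤ n)]; ring
  rw [hn1] at hYc1
  linear_combination hYc1 + hW1 - ((n:ℚ)/3) * hY01 - ((n:ℚ)/3) * hW0 - (1/3) * htrip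
    + (2*(n:ℚ)/3 + 1/4) * hrefl + ((n:ℚ)^2/3 + (n:ℚ)/12) * hS0v

open Real in
lemma zetaVal_eq (m : ℕ) (hm : m ≠ 0) : zetaVal (2*m) = (qB m : ℝ) * π^(2*m) := by
  have h := hasSum_zeta_nat hm
  have h1 : HasSum (fun k : ℕ => 1 / ((k:ℝ)+1)^(2*m))
      ((-1:ℝ)^(m+1) * 2^(2*m-1) * π^(2*m) * (bernoulli (2*m) : ℝ) / (Nat.factorial (2*m) : ℝ)) := by
    have h2 := (hasSum_nat_add_iff' (f := fun i : ℕ => 1 / (i:ℝ)^(2*m)) 1).mpr h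
    simp only [Finset.range_one, Finset.sum_singleton] at h2
    have h0 : (1:ℝ) / ((0:ℕ):ℝ)^(2*m) = 0 := by
      rw [Nat.cast_zero, zero_pow (by omega), div_zero]
    rw [h0, sub_zero] at h2
    convert h2 using 2 with k
    case e'_3 => rfl
    push_cast
    ring
  rw [zetaVal, h1.tsum_eq, qB, cB]
  push_cast
  ring

theorem A0_weight2 (n : ℕ) (hn : 2 ≤ n) :
    ∑ j ∈ Finset.Ico 1 n, (j : ℝ) ^ 2 * zetaVal (2 * j) * zetaVal (2 * (n - j)) =
      ((n : ℝ) * (8 * (n : ℝ) ^ 2 + 6 * (n : ℝ) + 1) / 24) * zetaVal (2 * n) -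
        ((2 * (n : ℝ) - 3) / 2) * zetaVal 2 * zetaVal (2 * n - 2) := by
  have K0 := qB_weight2 n hn
  have K := congrArg (Rat.cast : ℚ → ℝ) K0
  push_cast at K
  have hsum : ∑ j ∈ Finset.Ico 1 n, (j : ℝ) ^ 2 * zetaVal (2 * j) * zetaVal (2 * (n - j))
      = (∑ j ∈ Finset.Ico 1 n, (j:ℝ)^2 * ((qB j : ℝ) * (qB (n-j) : ℝ))) * Real.pi^(2*n) := by
    rw [Finset.sum_mul]
    apply Finset.sum_congr rfl
    intro j hj
    rw [Finset.mem_Ico] at hj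
    rw [zetaVal_eq j (by omega), zetaVal_eq (n-j) (by omega)]
    have hp : Real.pi^(2*j) * Real.pi^(2*(n-j)) = Real.pi^(2*n) := by
      rw [← pow_add]; congr 1; omega
    linear_combination ((j:ℝ)^2 * (qB j : ℝ) * (qB (n-j) : ℝ)) * hp
  have h2 : zetaVal 2 = (qB 1 : ℝ) * Real.pi^2 := by
    have h := zetaVal_eq 1 one_ne_zero
    norm_num at h
    exact h
  have h3 : zetaVal (2*n - 2) = (qB (n-1) : ℝ) * Real.pi^(2*(n-1)) := by
    rw [show 2*n - 2 = 2*(n-1) by omega]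
    exact zetaVal_eq (n-1) (by omega)
  rw [hsum, zetaVal_eq n (by omega), h2, h3]
  have hp2 : Real.pi^2 * Real.pi^(2*(n-1)) = Real.pi^(2*n) := by
    rw [← pow_add]; congr 1; omega
  linear_combination (Real.pi^(2*n)) * K
    + ((2*(n:ℝ)-3)/2 * (qB 1 : ℝ) * (qB (n-1) : ℝ)) * hp2
end

section
/- For every positive integer n, the identity Σ_{a,b≥0, a+b=n} C(2n,2a) B_{2a}(1/2) B_{2b}(1/2) = -(2n-1) B_{2n} holds, where B_m(x) are Bernoulli polynomials and B_m are Bernoulli numbers. -/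
open Finset Nat

namespace BHC
open PowerSeries Polynomial

noncomputable def E : ℚ⟦X⟧ := PowerSeries.exp ℚ

noncomputable def F : ℚ⟦X⟧ :=
  PowerSeries.mk fun n => Polynomial.aeval (1/2 : ℚ) ((1 / n ! : ℚ) • Polynomial.bernoulli n)

lemma coeff_F (n : ℕ) :
    PowerSeries.coeff n F = (Polynomial.bernoulli n).eval (1/2 : ℚ) / n ! := by
  simp [F, aeval_def, div_eq_mul_inv, mul_comm]

lemma F_eq : F * (E - 1) = PowerSeries.X * rescale (1/2 : ℚ) E :=
  Polynomial.bernoulli_generating_function (1/2 : ℚ)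

lemma E_sub_one_ne : (E - 1 : ℚ⟦X⟧) ≠ 0 := by
  intro h
  have := congrArg (PowerSeries.coeff 1) h
  simp [E, coeff_exp] at this

lemma deriv_E : d⁄dX ℚ E = E := by
  ext n
  rw [PowerSeries.coeff_derivative]
  simp only [E, coeff_exp, Algebra.algebraMap_self, RingHom.id_apply, factorial_succ]
  field_simp
  push_cast
  ring

lemma rescale_neg_F : rescale (-1 : ℚ) F = F := by
  have h := congrArg (rescale (-1 : ℚ)) F_eq
  simp only [map_mul, map_sub, map_one, rescale_X, rescale_rescale, map_neg] at h
  have hEneg : rescale (-1 : ℚ) E * E = 1 := by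
    have := PowerSeries.exp_mul_exp_eq_exp_add (-1 : ℚ) 1
    rw [rescale_one] at this
    simp only [RingHom.id_apply] at this
    simp only [E]
    rw [this]
    norm_num
  have hhalf : rescale ((1:ℚ)/2 * -1) E * E = rescale (1/2 : ℚ) E := by
    have := PowerSeries.exp_mul_exp_eq_exp_add ((1:ℚ)/2 * -1) 1
    rw [rescale_one] at this
    simp only [RingHom.id_apply] at this
    simp only [E]
    rw [this]
    norm_num
  have key : rescale (-1 : ℚ) F * (E - 1) = F * (E - 1) := by
    linear_combination (-E) * h + rescale (-1:ℚ) F * hEneg +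
      (PowerSeries.X : ℚ⟦X⟧) * hhalf - F_eq
  exact mul_right_cancel₀ E_sub_one_ne key

end BHC

namespace BHC
open PowerSeries Polynomial

lemma eval_half_odd {m : ℕ} (hm : Odd m) : (Polynomial.bernoulli m).eval (1/2 : ℚ) = 0 := by
  have h := congrArg (PowerSeries.coeff m) rescale_neg_F
  rw [coeff_rescale, coeff_F, hm.neg_one_pow] at h
  have hf : (m ! : ℚ) ≠ 0 := by positivity
  have h0 : (Polynomial.bernoulli m).eval (1/2:ℚ) / m ! = 0 := by linarith
  exact (div_eq_zero_iff.mp h0).resolve_right hf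

noncomputable def G : ℚ⟦X⟧ := bernoulliPowerSeries ℚ

lemma coeff_G (n : ℕ) : PowerSeries.coeff n G = _root_.bernoulli n / n ! := by
  simp [G, bernoulliPowerSeries]

lemma hG : G * (E - 1) = PowerSeries.X := bernoulliPowerSeries_mul_exp_sub_one ℚ

lemma hd : G * E + (E - 1) * d⁄dX ℚ G = 1 := by
  have h := congrArg (d⁄dX ℚ) hG
  rw [Derivation.leibniz, PowerSeries.derivative_X, map_sub, deriv_E, Derivation.map_one_eq_zero, sub_zero,
    smul_eq_mul, smul_eq_mul] at h
  linear_combination h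

lemma FF_eq : F * F = G - PowerSeries.X * d⁄dX ℚ G := by
  have hr : rescale (1/2 : ℚ) E * rescale (1/2 : ℚ) E = E := by
    have := PowerSeries.exp_mul_exp_eq_exp_add ((1:ℚ)/2) ((1:ℚ)/2)
    simp only [E]
    rw [this]
    norm_num
  have hd2 : (E - 1) * d⁄dX ℚ G = 1 - G * E := by linear_combination hd
  have key : F * F * ((E-1)*(E-1)) = (G - PowerSeries.X * d⁄dX ℚ G) * ((E-1)*(E-1)) := by
    linear_combination (F*(E-1) + PowerSeries.X * rescale (1/2:ℚ) E) * F_eq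
      + PowerSeries.X * PowerSeries.X * hr - ((E-1) + PowerSeries.X*E) * hG
      + PowerSeries.X * (E-1) * hd2
  exact mul_right_cancel₀ (mul_ne_zero E_sub_one_ne E_sub_one_ne) key

lemma conv (k : ℕ) :
    ∑ p ∈ Finset.HasAntidiagonal.antidiagonal (k+1),
      ((Polynomial.bernoulli p.1).eval (1/2:ℚ) / p.1 !) *
        ((Polynomial.bernoulli p.2).eval (1/2:ℚ) / p.2 !)
      = _root_.bernoulli (k+1) / (k+1)! - (k+1) * (_root_.bernoulli (k+1) / (k+1)!) := by
  have h := congrArg (PowerSeries.coeff (k+1)) FF_eq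
  rw [PowerSeries.coeff_mul, map_sub, PowerSeries.coeff_succ_X_mul,
    PowerSeries.coeff_derivative, coeff_G] at h
  simp only [coeff_F] at h
  rw [h]
  ring

end BHC

/-- `Σ_{a+b=n, a,b ≥ 0} C(2n,2a) B_{2a}(1/2) B_{2b}(1/2) = -(2n-1) B_{2n}`. -/
theorem bernoulli_half_convolution (n : ℕ) (hn : 0 < n) :
    ∑ a ∈ Finset.range (n + 1),
        ((2 * n).choose (2 * a) : ℚ) * (Polynomial.bernoulli (2 * a)).eval (1 / 2) *
          (Polynomial.bernoulli (2 * (n - a))).eval (1 / 2) =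
      -(2 * (n : ℚ) - 1) * bernoulli (2 * n) := by
  set c : ℕ → ℚ := fun k => (Polynomial.bernoulli k).eval (1/2 : ℚ) with hc
  have h := BHC.conv (2*n - 1)
  have h2n : 2*n - 1 + 1 = 2*n := by omega
  rw [h2n, Finset.Nat.sum_antidiagonal_eq_sum_range_succ_mk] at h
  have hcast : ((2*n - 1 : ℕ) : ℚ) + 1 = 2*(n:ℚ) := by
    rw [Nat.cast_sub (by omega)]; push_cast; ring
  have key : ∑ k ∈ Finset.range (2*n+1), ((2*n).choose k : ℚ) * c k * c (2*n - k)
      = -(2*(n:ℚ) - 1) * _root_.bernoulli (2*n) := by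
    have hfac : ((2*n)! : ℚ) ≠ 0 := by positivity
    calc ∑ k ∈ Finset.range (2*n+1), ((2*n).choose k : ℚ) * c k * c (2*n - k)
        = ∑ k ∈ Finset.range (2*n+1), (c k / k ! * (c (2*n - k) / (2*n - k)!)) * (2*n)! := by
          refine Finset.sum_congr rfl fun k hk => ?_
          have hk' : k ≤ 2*n := by
            simp only [Finset.mem_range] at hk; omega
          rw [Nat.cast_choose ℚ hk']
          have h1 : (k ! : ℚ) ≠ 0 := by positivity
          have h2 : (((2*n - k) : ℕ)! : ℚ) ≠ 0 := by positivity
          field_simp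
      _ = (_root_.bernoulli (2*n) / (2*n)! - (((2*n-1 : ℕ):ℚ)+1) * (_root_.bernoulli (2*n) / (2*n)!)) * (2*n)! := by
          rw [← Finset.sum_mul, h]
      _ = -(2*(n:ℚ) - 1) * _root_.bernoulli (2*n) := by
          rw [hcast]
          field_simp
          ring
  have himg : Finset.range (2*n+1) ⊇ (Finset.range (n+1)).image (fun a => 2*a) := by
    intro x hx
    simp only [Finset.mem_image, Finset.mem_range] at hx ⊢
    obtain ⟨a, ha, rfl⟩ := hx
    omega
  have hzero : ∀ x ∈ Finset.range (2*n+1), x ∉ (Finset.range (n+1)).image (fun a => 2*a) →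
      ((2*n).choose x : ℚ) * c x * c (2*n - x) = 0 := by
    intro x hx hnx
    have hodd : Odd x := by
      rcases Nat.even_or_odd x with he | ho
      · exfalso
        obtain ⟨a, rfl⟩ := he
        apply hnx
        simp only [Finset.mem_image, Finset.mem_range] at hx ⊢
        exact ⟨a, by omega, by omega⟩
      · exact ho
    have hx0 : c x = 0 := BHC.eval_half_odd hodd
    rw [hx0, mul_zero, zero_mul]
  have hstep := Finset.sum_subset himg hzero
  rw [← hstep, Finset.sum_image (fun a _ b _ hab => by omega)] at key
  rw [← key]
  refine Finset.sum_congr rfl fun a ha => ?_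
  have ha' : a ≤ n := by simp only [Finset.mem_range] at ha; omega
  have : 2*n - 2*a = 2*(n - a) := by omega
  rw [this]
end
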